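/- Let n, λ, μ, b ∈ ℂ with μ ≠ 0, and let k₀ ∈ ℤ be such that k + b + n − 1 ≠ 0 and k + b + 1 ≠ 0 for every integer k > k₀. Then there exists a sequence (a_k)_{k≥k₀} of complex numbers, not identically zero, satisfying the Heun recurrence ((k+b)(k+b+n−1) + λ)a_k − μ(k+b+n−1)a_{k−1} + μ(k+b+1)a_{k+1} = 0 at every integer k > k₀, such that the power series ∑_{k≥k₀} a_k z^{k−k₀} has infinite radius of convergence; and it is unique up to a constant factor: any sequence (a'_k)_{k≥k₀} satisfying the same recurrence at every k > k₀ and such that ∑_{k≥k₀} a'_k z^{k−k₀} has positive (possibly infinite) radius of convergence is of the form a'_k = c·a_k for some c ∈ ℂ. -/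

import Mathlib

open Filter Topology Nat BoundedContinuousFunction

/-- The Heun recurrence with parameters `n, λ, μ, b` at index `k`, relating consecutive
coefficients `x = a (k-1)`, `y = a k`, `z = a (k+1)`:
`((k+b)(k+b+n-1) + λ) a k - μ (k+b+n-1) a (k-1) + μ (k+b+1) a (k+1) = 0`. -/
def HeunRec (n lam mu b : ℂ) (x y z k : ℂ) : Prop :=
  ((k + b) * (k + b + n - 1) + lam) * y - mu * (k + b + n - 1) * x + mu * (k + b + 1) * z = 0

private lemma heun_ineq2 (x t q M : ℝ) (hx : 0 ≤ x) (ht : 0 < t) (hq2 : 2 ≤ q)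
    (hKM : 16 * x * t + 10 * q + 100 < M) :
    x * (M + 1 + q) * t ≤ 1/4 * (2 * ((M+1)^2/2)) := by
  have hmt0 : (0:ℝ) ≤ x * t := mul_nonneg hx ht.le
  have hqM : q ≤ M + 1 := by linarith
  have h8 : 8 * (x * t) ≤ M + 1 := by linarith
  have e1 : x * q * t ≤ x * (M+1) * t :=
    mul_le_mul_of_nonneg_right (mul_le_mul_of_nonneg_left hqM hx) ht.le
  have e2 : 8 * (x * t) * (M+1) ≤ (M+1) * (M+1) :=
    mul_le_mul_of_nonneg_right h8 (by linarith)
  nlinarith [e1, e2]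

private lemma norm_add_lower (x y : ℂ) : ‖x‖ - ‖y‖ ≤ ‖x + y‖ := by
  have h : ‖(x+y) - y‖ ≤ ‖x+y‖ + ‖y‖ := norm_sub_le _ _
  have e : (x+y) - y = x := by ring
  rw [e] at h
  linarith

lemma heun_aux_exists (al be ga : ℕ → ℂ) (t : ℝ) (ht : 0 < t)
    (hα : ∀ m, al m ≠ 0)
    (hc : ∀ m : ℕ, ‖be m‖ * ((m : ℝ) + 1) ≤ 1/2 * (t * ‖al m‖))
    (hd : ∀ m : ℕ, ‖ga m‖ * t ≤ 1/4 * (((m : ℝ) + 2) * ‖al m‖)) :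
    ∃ a : ℕ → ℂ, a 0 = 1 ∧
      (∀ m, al m * a (m+1) - be m * a m + ga m * a (m+2) = 0) ∧
      ∀ m, ‖a m‖ ≤ 4 * t ^ m / m ! := by
  set c : ℕ → ℂ := fun j => be j / al j * (((j:ℂ)+1)/(t:ℂ)) with hcdef
  set d : ℕ → ℂ := fun j => -(ga j / al j) * ((t:ℂ)/((j:ℂ)+2)) with hddef
  have hαn : ∀ j, (0:ℝ) < ‖al j‖ := fun j => norm_pos_iff.mpr (hα j)
  have hnc : ∀ j : ℕ, ‖((j:ℂ) + 1)‖ = (j:ℝ) + 1 := by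
    intro j
    have : ((j:ℂ) + 1) = ((j+1 : ℕ) : ℂ) := by push_cast; ring
    rw [this, Complex.norm_natCast]; push_cast; ring
  have hnc2 : ∀ j : ℕ, ‖((j:ℂ) + 2)‖ = (j:ℝ) + 2 := by
    intro j
    have : ((j:ℂ) + 2) = ((j+2 : ℕ) : ℂ) := by push_cast; ring
    rw [this, Complex.norm_natCast]; push_cast; ring
  have hcb : ∀ j, ‖c j‖ ≤ 1/2 := by
    intro j
    have h1 : ‖c j‖ = ‖be j‖ / ‖al j‖ * (((j:ℝ)+1)/t) := by
      simp [hcdef, norm_mul, norm_div, hnc j, Complex.norm_real, abs_of_pos ht]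
    rw [h1, _root_.div_mul_div_comm, div_le_iff₀ (mul_pos (hαn j) ht)]
    calc ‖be j‖ * ((j:ℝ)+1) ≤ 1/2 * (t * ‖al j‖) := hc j
      _ = 1/2 * (‖al j‖ * t) := by ring
  have hdb : ∀ j, ‖d j‖ ≤ 1/4 := by
    intro j
    have h1 : ‖d j‖ = ‖ga j‖ / ‖al j‖ * (t/((j:ℝ)+2)) := by
      simp [hddef, norm_mul, norm_div, hnc2 j, Complex.norm_real, abs_of_pos ht]
    rw [h1, _root_.div_mul_div_comm, div_le_iff₀ (mul_pos (hαn j) (by positivity))]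
    calc ‖ga j‖ * t ≤ 1/4 * (((j:ℝ)+2) * ‖al j‖) := hd j
      _ = 1/4 * (‖al j‖ * ((j:ℝ)+2)) := by ring
  -- the contraction map
  set G : (ℕ →ᵇ ℂ) → (ℕ →ᵇ ℂ) := fun u =>
    BoundedContinuousFunction.ofNormedAddCommGroup
      (fun j => Nat.casesOn j (1:ℂ) (fun i => c i * u i + d i * u (i+2)))
      continuous_of_discreteTopology (1 + ‖u‖) (by
        intro j
        cases j with
        | zero => simpa using le_add_of_nonneg_right (norm_nonneg u)
        | succ i =>
          have h1 : ‖c i * u i + d i * u (i+2)‖ ≤ 1/2 * ‖u‖ + 1/4 * ‖u‖ := by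
            refine (norm_add_le _ _).trans (add_le_add ?_ ?_)
            · rw [norm_mul]
              exact mul_le_mul (hcb i) (u.norm_coe_le_norm i) (norm_nonneg _) (by norm_num)
            · rw [norm_mul]
              exact mul_le_mul (hdb i) (u.norm_coe_le_norm (i+2)) (norm_nonneg _) (by norm_num)
          have := norm_nonneg u
          simp only []
          linarith) with hGdef
  have hGcoe : ∀ u j, (G u) j = Nat.casesOn j (1:ℂ) (fun i => c i * u i + d i * u (i+2)) := by
    intro u j; simp [hGdef, BoundedContinuousFunction.coe_ofNormedAddCommGroup]
  have hG : ContractingWith (3/4 : NNReal) G := by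
    refine ⟨by rw [← NNReal.coe_lt_coe]; norm_num, LipschitzWith.of_dist_le_mul (fun u v => ?_)⟩
    have h34 : ((3/4 : NNReal) : ℝ) = 3/4 := by norm_num
    rw [h34, BoundedContinuousFunction.dist_le (mul_nonneg (by norm_num) dist_nonneg)]
    intro j
    rw [dist_eq_norm]
    cases j with
    | zero =>
      simp only [hGcoe]
      simpa using mul_nonneg (by norm_num : (0:ℝ) ≤ 3/4) dist_nonneg
    | succ i =>
      rw [hGcoe, hGcoe]
      have e : (c i * u i + d i * u (i+2)) - (c i * v i + d i * v (i+2))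
          = c i * (u i - v i) + d i * (u (i+2) - v (i+2)) := by ring
      rw [e]
      have du1 : ‖u i - v i‖ ≤ dist u v := by
        have := BoundedContinuousFunction.dist_coe_le_dist (f := u) (g := v) i
        rwa [dist_eq_norm] at this
      have du2 : ‖u (i+2) - v (i+2)‖ ≤ dist u v := by
        have := BoundedContinuousFunction.dist_coe_le_dist (f := u) (g := v) (i+2)
        rwa [dist_eq_norm] at this
      have b1 : ‖c i * (u i - v i)‖ ≤ 1/2 * dist u v := by
        rw [norm_mul]
        exact mul_le_mul (hcb i) du1 (norm_nonneg _) (by norm_num)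
      have b2 : ‖d i * (u (i+2) - v (i+2))‖ ≤ 1/4 * dist u v := by
        rw [norm_mul]
        exact mul_le_mul (hdb i) du2 (norm_nonneg _) (by norm_num)
      have := norm_add_le (c i * (u i - v i)) (d i * (u (i+2) - v (i+2)))
      linarith
  set u : ℕ →ᵇ ℂ := ContractingWith.fixedPoint G hG with hudef
  have hufix : G u = u := hG.fixedPoint_isFixedPt
  have hup : ∀ j, u j = Nat.casesOn j (1:ℂ) (fun i => c i * u i + d i * u (i+2)) := by
    intro j
    conv_lhs => rw [← hufix]
    exact hGcoe u j
  have hu0 : u 0 = 1 := hup 0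
  have hu4 : ∀ j, ‖u j‖ ≤ 4 := by
    have hb : ‖u‖ ≤ max 1 (3/4 * ‖u‖) := by
      rw [BoundedContinuousFunction.norm_le (le_max_of_le_left zero_le_one)]
      intro j
      rw [hup j]
      cases j with
      | zero => simp
      | succ i =>
        refine le_max_of_le_right ?_
        calc ‖c i * u i + d i * u (i+2)‖ ≤ 1/2 * ‖u‖ + 1/4 * ‖u‖ := by
              refine (norm_add_le _ _).trans (add_le_add ?_ ?_)
              · rw [norm_mul]
                exact mul_le_mul (hcb i) (u.norm_coe_le_norm i) (norm_nonneg _) (by norm_num)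
              · rw [norm_mul]
                exact mul_le_mul (hdb i) (u.norm_coe_le_norm (i+2)) (norm_nonneg _) (by norm_num)
          _ = 3/4 * ‖u‖ := by ring
    have : ‖u‖ ≤ 4 := by
      rcases le_max_iff.mp hb with h | h
      · linarith
      · linarith
    exact fun j => (u.norm_coe_le_norm j).trans this
  refine ⟨fun m => u m * (t:ℂ)^m / (m ! : ℂ), ?_, ?_, ?_⟩
  · simp [hu0]
  · intro m
    have hm : c m * u m + d m * u (m+2) = u (m+1) := (hup (m+1)).symm
    have htne : (t:ℂ) ≠ 0 := Complex.ofReal_ne_zero.mpr (ne_of_gt ht)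
    have h1ne : ((m:ℂ) + 1) ≠ 0 := by
      have e : ((m:ℂ) + 1) = ((m+1 : ℕ) : ℂ) := by push_cast; ring
      rw [e]; exact Nat.cast_ne_zero.mpr (by omega)
    have h2ne : ((m:ℂ) + 2) ≠ 0 := by
      have e : ((m:ℂ) + 2) = ((m+2 : ℕ) : ℂ) := by push_cast; ring
      rw [e]; exact Nat.cast_ne_zero.mpr (by omega)
    have hfne : (m ! : ℂ) ≠ 0 := Nat.cast_ne_zero.mpr (Nat.factorial_ne_zero m)
    have e1 : ((m+1)! : ℂ) = ((m:ℂ)+1) * (m ! : ℂ) := by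
      rw [Nat.factorial_succ]; push_cast; ring
    have e2 : ((m+2)! : ℂ) = ((m:ℂ)+2) * (((m:ℂ)+1) * (m ! : ℂ)) := by
      show ((m+1+1)! : ℂ) = _
      rw [Nat.factorial_succ, Nat.factorial_succ]; push_cast; ring
    show al m * (u (m+1) * (t:ℂ)^(m+1) / ((m+1)! : ℂ)) - be m * (u m * (t:ℂ)^m / ((m)! : ℂ))
      + ga m * (u (m+2) * (t:ℂ)^(m+2) / ((m+2)! : ℂ)) = 0
    have key : al m * ((t:ℂ) * ((m:ℂ)+2)) * u (m+1) - be m * (((m:ℂ)+1) * ((m:ℂ)+2)) * u m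
        + ga m * ((t:ℂ)*(t:ℂ)) * u (m+2) = 0 := by
      rw [← hm]
      simp only [hcdef, hddef]
      field_simp [hα m, htne, h2ne]
      ring
    rw [e1, e2]
    calc al m * (u (m+1) * (t:ℂ)^(m+1) / (((m:ℂ)+1) * ((m ! : ℕ) : ℂ)))
          - be m * (u m * (t:ℂ)^m / ((m ! : ℕ) : ℂ))
          + ga m * (u (m+2) * (t:ℂ)^(m+2) / (((m:ℂ)+2) * (((m:ℂ)+1) * ((m ! : ℕ) : ℂ))))
        = (((m:ℂ)+1) * (((m:ℂ)+2) * ((m ! : ℕ) : ℂ)))⁻¹ * ((t:ℂ)^m *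
            (al m * ((t:ℂ) * ((m:ℂ)+2)) * u (m+1) - be m * (((m:ℂ)+1) * ((m:ℂ)+2)) * u m
              + ga m * ((t:ℂ)*(t:ℂ)) * u (m+2))) := by
          field_simp
          ring
      _ = 0 := by rw [key, mul_zero, mul_zero]
  · intro m
    have : ‖u m * (t:ℂ)^m / (m ! : ℂ)‖ = ‖u m‖ * t^m / m ! := by
      rw [norm_div, norm_mul, norm_pow, Complex.norm_real, Complex.norm_natCast,
        Real.norm_eq_abs, abs_of_pos ht]
    rw [this]
    have h4 := hu4 m
    have h0 : (0:ℝ) ≤ t ^ m / m ! := by positivity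
    calc ‖u m‖ * t ^ m / m ! = ‖u m‖ * (t ^ m / m !) := by ring
      _ ≤ 4 * (t ^ m / m !) := by nlinarith
      _ = 4 * t ^ m / m ! := by ring


lemma heun_aux_extend (al be ga : ℕ → ℂ) (hβ : ∀ m, be m ≠ 0) :
    ∀ K : ℕ, ∀ w : ℕ → ℂ,
      (∀ m, al (K+m) * w (m+1) - be (K+m) * w m + ga (K+m) * w (m+2) = 0) →
      ∃ a : ℕ → ℂ, (∀ m, al m * a (m+1) - be m * a m + ga m * a (m+2) = 0) ∧ ∀ j, a (K+j) = w j := by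
  intro K
  induction K with
  | zero => exact fun w hw => ⟨w, by simpa using hw, fun j => by simp⟩
  | succ K ih =>
    intro w hw
    set w' : ℕ → ℂ := fun j => Nat.casesOn j ((al K * w 0 + ga K * w 1) / be K) (fun i => w i) with hw'
    have hw'rec : ∀ m, al (K+m) * w' (m+1) - be (K+m) * w' m + ga (K+m) * w' (m+2) = 0 := by
      intro m
      cases m with
      | zero =>
        show al K * w 0 - be K * ((al K * w 0 + ga K * w 1) / be K) + ga K * w 1 = 0
        field_simp [hβ K]
        ring
      | succ i =>
        show al (K+(i+1)) * w (i+1) - be (K+(i+1)) * w i + ga (K+(i+1)) * w (i+2) = 0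
        have e : K + (i+1) = (K+1) + i := by omega
        rw [e]
        exact hw i
    obtain ⟨a, ha, hval⟩ := ih w' hw'rec
    refine ⟨a, ha, fun j => ?_⟩
    have e : (K+1) + j = K + (j+1) := by omega
    rw [e, hval (j+1)]

lemma heun_aux_zero (al be ga : ℕ → ℂ) (hγ : ∀ m, ga m ≠ 0) (a : ℕ → ℂ)
    (hrec : ∀ m, al m * a (m+1) - be m * a m + ga m * a (m+2) = 0)
    (h0 : a 0 = 0) (h1 : a 1 = 0) : ∀ m, a m = 0 := by
  have key : ∀ m, a m = 0 ∧ a (m+1) = 0 := by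
    intro m
    induction m with
    | zero => exact ⟨h0, h1⟩
    | succ k ih =>
      refine ⟨ih.2, ?_⟩
      have h := hrec k
      rw [ih.1, ih.2] at h
      have : ga k * a (k+2) = 0 := by linear_combination h
      exact (mul_eq_zero.mp this).resolve_left (hγ k)
  exact fun m => (key m).1

lemma heun_aux_prop (al be ga : ℕ → ℂ) (hγ : ∀ m, ga m ≠ 0) (a a' : ℕ → ℂ) (c : ℂ)
    (hrec : ∀ m, al m * a (m+1) - be m * a m + ga m * a (m+2) = 0)
    (hrec' : ∀ m, al m * a' (m+1) - be m * a' m + ga m * a' (m+2) = 0)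
    (h0 : a' 0 = c * a 0) (h1 : a' 1 = c * a 1) : ∀ m, a' m = c * a m := by
  have key : ∀ m, a' m = c * a m ∧ a' (m+1) = c * a (m+1) := by
    intro m
    induction m with
    | zero => exact ⟨h0, h1⟩
    | succ k ih =>
      refine ⟨ih.2, ?_⟩
      have h := hrec k
      have h' := hrec' k
      have : ga k * a' (k+2) = ga k * (c * a (k+2)) := by
        linear_combination h' - c * h - al k * ih.2 + be k * ih.1
      exact mul_left_cancel₀ (hγ k) this
  exact fun m => (key m).1



set_option maxHeartbeats 2000000 in
/-- Forward solutions: for `μ ≠ 0` and `k₀ ∈ ℤ` with `k + b + n - 1 ≠ 0` and `k + b + 1 ≠ 0`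
for all `k > k₀`, there is a sequence `(a_k)_{k ≥ k₀}` (encoded as `a m = a_{k₀+m}`),
unique up to a constant factor, not identically zero, satisfying the Heun recurrence at every
`k > k₀` and such that `∑_{k ≥ k₀} a_k z^(k-k₀)` has infinite radius of convergence. -/
theorem heun_forward_solution
    (n lam mu b : ℂ) (hmu : mu ≠ 0) (k0 : ℤ)
    (hk : ∀ k : ℤ, k0 < k → ((k : ℂ) + b + n - 1 ≠ 0 ∧ (k : ℂ) + b + 1 ≠ 0)) :
    ∃ a : ℕ → ℂ, a ≠ 0 ∧
      (∀ m : ℕ, HeunRec n lam mu b (a m) (a (m + 1)) (a (m + 2)) ((k0 : ℂ) + m + 1)) ∧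
      (∀ z : ℂ, Summable fun m => a m * z ^ m) ∧
      ∀ a' : ℕ → ℂ,
        (∀ m : ℕ, HeunRec n lam mu b (a' m) (a' (m + 1)) (a' (m + 2)) ((k0 : ℂ) + m + 1)) →
        (∃ z : ℂ, z ≠ 0 ∧ Summable fun m => a' m * z ^ m) →
        ∃ c : ℂ, ∀ m, a' m = c * a m := by
  classical
  set al : ℕ → ℂ := fun m => ((k0:ℂ) + (m:ℂ) + 1 + b) * ((k0:ℂ) + (m:ℂ) + 1 + b + n - 1) + lam
    with hal
  set be : ℕ → ℂ := fun m => mu * ((k0:ℂ) + (m:ℂ) + 1 + b + n - 1) with hbe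
  set ga : ℕ → ℂ := fun m => mu * ((k0:ℂ) + (m:ℂ) + 1 + b + 1) with hga
  -- nonvanishing of the off-diagonal coefficients
  have hfact : ∀ m : ℕ, ((k0:ℂ) + (m:ℂ) + 1 + b + n - 1 ≠ 0) ∧ ((k0:ℂ) + (m:ℂ) + 1 + b + 1 ≠ 0) := by
    intro m
    have h := hk (k0 + (m+1)) (by omega)
    have e : ((k0 + (m+1) : ℤ) : ℂ) = (k0:ℂ) + (m:ℂ) + 1 := by push_cast; ring
    rw [e] at h
    exact h
  have hbne : ∀ m, be m ≠ 0 := fun m => mul_ne_zero hmu (hfact m).1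
  have hgne : ∀ m, ga m ≠ 0 := fun m => mul_ne_zero hmu (hfact m).2
  -- constants
  set q : ℝ := ‖(k0:ℂ) + b‖ + ‖n‖ + ‖lam‖ + 2 with hq
  have hq2 : 2 ≤ q := by
    have := norm_nonneg ((k0:ℂ) + b); have := norm_nonneg n; have := norm_nonneg lam
    simp only [hq]; linarith
  set t : ℝ := 8 * ‖mu‖ + 8 with htdef
  have ht : 0 < t := by positivity
  have ht8 : 8 * ‖mu‖ ≤ t := by simp only [htdef]; linarith
  obtain ⟨K, hK⟩ := exists_nat_gt (16 * ‖mu‖ * t + 10 * q + 100)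
  have hmut : 0 ≤ 16 * ‖mu‖ * t := by positivity
  -- norm computations
  have hnorm1 : ∀ m : ℕ, ‖((m:ℂ)+1)‖ = (m:ℝ)+1 := by
    intro m
    have e : ((m:ℂ) + 1) = ((m+1 : ℕ) : ℂ) := by push_cast; ring
    rw [e, Complex.norm_natCast]; push_cast; ring
  have hw1 : ‖(k0:ℂ) + b‖ ≤ q := by
    have := norm_nonneg n; have := norm_nonneg lam
    simp only [hq]; linarith
  have hw2 : ‖(k0:ℂ) + b + n - 1‖ ≤ q := by
    have h1 : ‖(k0:ℂ) + b + n - 1‖ ≤ ‖(k0:ℂ) + b‖ + ‖n - 1‖ := by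
      have e : (k0:ℂ) + b + n - 1 = ((k0:ℂ) + b) + (n - 1) := by ring
      rw [e]; exact norm_add_le _ _
    have h2 : ‖n - (1:ℂ)‖ ≤ ‖n‖ + 1 := by
      have := norm_sub_le n (1:ℂ); simpa using this
    have := norm_nonneg lam
    simp only [hq]; linarith
  have hw3 : ‖(k0:ℂ) + b + 1‖ ≤ q := by
    have h1 : ‖(k0:ℂ) + b + 1‖ ≤ ‖(k0:ℂ) + b‖ + 1 := by
      have := norm_add_le ((k0:ℂ) + b) 1; simpa using this
    have := norm_nonneg n; have := norm_nonneg lam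
    simp only [hq]; linarith
  -- decompositions
  have dec2 : ∀ m : ℕ, (k0:ℂ) + (m:ℂ) + 1 + b + n - 1 = ((m:ℂ)+1) + ((k0:ℂ) + b + n - 1) :=
    fun m => by ring
  have dec3 : ∀ m : ℕ, (k0:ℂ) + (m:ℂ) + 1 + b + 1 = ((m:ℂ)+1) + ((k0:ℂ) + b + 1) :=
    fun m => by ring
  have dec1 : ∀ m : ℕ, (k0:ℂ) + (m:ℂ) + 1 + b = ((m:ℂ)+1) + ((k0:ℂ) + b) :=
    fun m => by ring
  have hBu : ∀ m : ℕ, ‖be m‖ ≤ ‖mu‖ * ((m:ℝ)+1+q) := by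
    intro m
    have h : ‖(k0:ℂ) + (m:ℂ) + 1 + b + n - 1‖ ≤ (m:ℝ)+1+q := by
      rw [dec2 m]
      have := norm_add_le ((m:ℂ)+1) ((k0:ℂ) + b + n - 1)
      rw [hnorm1 m] at this; linarith
    simp only [hbe, norm_mul]
    exact mul_le_mul_of_nonneg_left h (norm_nonneg mu)
  have hGu : ∀ m : ℕ, ‖ga m‖ ≤ ‖mu‖ * ((m:ℝ)+1+q) := by
    intro m
    have h : ‖(k0:ℂ) + (m:ℂ) + 1 + b + 1‖ ≤ (m:ℝ)+1+q := by
      rw [dec3 m]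
      have := norm_add_le ((m:ℂ)+1) ((k0:ℂ) + b + 1)
      rw [hnorm1 m] at this; linarith
    simp only [hga, norm_mul]
    exact mul_le_mul_of_nonneg_left h (norm_nonneg mu)
  have hBl : ∀ m : ℕ, ‖mu‖ * ((m:ℝ)+1-q) ≤ ‖be m‖ := by
    intro m
    have h : (m:ℝ)+1-q ≤ ‖(k0:ℂ) + (m:ℂ) + 1 + b + n - 1‖ := by
      rw [dec2 m]
      have := norm_add_lower ((m:ℂ)+1) ((k0:ℂ) + b + n - 1)
      rw [hnorm1 m] at this; linarith
    simp only [hbe, norm_mul]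
    exact mul_le_mul_of_nonneg_left h (norm_nonneg mu)
  have hAl : ∀ m : ℕ, (K:ℝ) ≤ (m:ℝ) → ((m:ℝ)+1)^2/2 ≤ ‖al m‖ := by
    intro m hm
    have hMq : 10*q + 100 ≤ (m:ℝ) := by linarith
    have e : al m = (((m:ℂ)+1) + ((k0:ℂ)+b)) * (((m:ℂ)+1) + ((k0:ℂ)+b+n-1)) + lam := by
      simp only [hal]; ring
    have l1 : (m:ℝ)+1-q ≤ ‖((m:ℂ)+1) + ((k0:ℂ)+b)‖ := by
      have := norm_add_lower ((m:ℂ)+1) ((k0:ℂ)+b)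
      rw [hnorm1 m] at this; linarith
    have l2 : (m:ℝ)+1-q ≤ ‖((m:ℂ)+1) + ((k0:ℂ)+b+n-1)‖ := by
      have := norm_add_lower ((m:ℂ)+1) ((k0:ℂ)+b+n-1)
      rw [hnorm1 m] at this; linarith
    have hpos : (0:ℝ) ≤ (m:ℝ)+1-q := by linarith
    have hmul : ((m:ℝ)+1-q)*((m:ℝ)+1-q)
        ≤ ‖(((m:ℂ)+1) + ((k0:ℂ)+b)) * (((m:ℂ)+1) + ((k0:ℂ)+b+n-1))‖ := by
      rw [norm_mul]
      exact mul_le_mul l1 l2 hpos (norm_nonneg _)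
    have hlow : ‖(((m:ℂ)+1) + ((k0:ℂ)+b)) * (((m:ℂ)+1) + ((k0:ℂ)+b+n-1))‖ - ‖lam‖ ≤ ‖al m‖ := by
      rw [e]; exact norm_add_lower _ _
    have hlamq : ‖lam‖ ≤ q := by
      have := norm_nonneg ((k0:ℂ) + b); have := norm_nonneg n
      simp only [hq]; linarith
    nlinarith [hmul, hlow, hlamq, hq2, hMq]
  have hane : ∀ m : ℕ, (K:ℝ) ≤ (m:ℝ) → al m ≠ 0 := by
    intro m hm h0
    have := hAl m hm
    rw [h0, norm_zero] at this
    nlinarith [this]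
  -- apply the existence lemma to the shifted coefficients
  obtain ⟨w, hw0, hwrec, hwb⟩ := heun_aux_exists (fun j => al (K+j)) (fun j => be (K+j))
      (fun j => ga (K+j)) t ht
    (fun j => hane (K+j) (by push_cast; linarith))
    (by
      intro j
      have hKj : (K:ℝ) ≤ ((K+j : ℕ):ℝ) := by push_cast; linarith
      have h1 := hBu (K+j)
      have h2 := hAl (K+j) hKj
      have hj1 : ((j:ℝ)+1) ≤ ((K+j:ℕ):ℝ)+1 := by push_cast; linarith
      have hKM : 16 * ‖mu‖ * t + 10 * q + 100 < ((K+j:ℕ):ℝ) := by push_cast; linarith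
      have hb0 : (0:ℝ) ≤ ‖be (K+j)‖ := norm_nonneg _
      have hmu0 : (0:ℝ) ≤ ‖mu‖ := norm_nonneg _
      set M : ℝ := ((K+j:ℕ):ℝ) with hM
      have hj0 : (0:ℝ) ≤ (j:ℝ)+1 := by positivity
      calc ‖be (K+j)‖ * ((j:ℝ)+1) ≤ (‖mu‖ * (M+1+q)) * (M+1) := by
            apply mul_le_mul h1 hj1 hj0 (by positivity)
        _ ≤ 1/2 * (t * (((M:ℝ)+1)^2/2)) := by
            have hqM : q ≤ M + 1 := by linarith
            nlinarith [mul_le_mul_of_nonneg_right (mul_le_mul_of_nonneg_left hqM hmu0)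
                (show (0:ℝ) ≤ M+1 by linarith),
              mul_le_mul_of_nonneg_right ht8 (sq_nonneg (M+1))]
        _ ≤ 1/2 * (t * ‖al (K+j)‖) := by nlinarith [hAl (K+j) hKj, ht]
      )
    (by
      intro j
      have hKj : (K:ℝ) ≤ ((K+j : ℕ):ℝ) := by push_cast; linarith
      have h1 := hGu (K+j)
      have h2 := hAl (K+j) hKj
      have hKM : 16 * ‖mu‖ * t + 10 * q + 100 < ((K+j:ℕ):ℝ) := by push_cast; linarith
      have hmu0 : (0:ℝ) ≤ ‖mu‖ := norm_nonneg _
      set M : ℝ := ((K+j:ℕ):ℝ) with hM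
      have hj2 : (2:ℝ) ≤ (j:ℝ)+2 := by
        have : (0:ℝ) ≤ (j:ℝ) := Nat.cast_nonneg j
        linarith
      have hMj : (j:ℝ)+2 ≤ M+2 := by simp only [hM]; push_cast; linarith
      calc ‖ga (K+j)‖ * t ≤ (‖mu‖ * (M+1+q)) * t := by
            exact mul_le_mul_of_nonneg_right h1 ht.le
        _ ≤ 1/4 * (2 * ((M+1)^2/2)) := heun_ineq2 ‖mu‖ t q M hmu0 ht hq2 hKM
        _ ≤ 1/4 * (((j:ℝ)+2) * ‖al (K+j)‖) := by nlinarith [h2, hj2, sq_nonneg (M+1)]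
      )
  -- extend backwards
  obtain ⟨a, ha, hval⟩ := heun_aux_extend al be ga hbne K w hwrec
  have haK : a K = 1 := by
    have := hval 0
    simpa [hw0] using this
  refine ⟨a, ?_, ?_, ?_, ?_⟩
  · -- a ≠ 0
    intro h
    rw [h] at haK
    simp at haK
  · -- recurrence
    intro m
    have h := ha m
    unfold HeunRec
    push_cast
    linear_combination h
  · -- summability
    intro z
    rw [← summable_nat_add_iff K]
    have hsummaj : Summable (fun j : ℕ => (4*‖z‖^K) * ((t*‖z‖)^j / (j)!)) :=
      (Real.summable_pow_div_factorial (t*‖z‖)).mul_left _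
    apply Summable.of_norm_bounded hsummaj
    intro j
    have e : j + K = K + j := by omega
    rw [norm_mul, e, hval j, norm_pow]
    calc ‖w j‖ * ‖z‖^(K+j) ≤ (4 * t^j / (j)!) * ‖z‖^(K+j) := by
          exact mul_le_mul_of_nonneg_right (hwb j) (by positivity)
      _ = (4*‖z‖^K) * ((t*‖z‖)^j / (j)!) := by
          rw [pow_add, mul_pow]; ring
  · -- uniqueness
    intro a' hrec' ⟨z, hz0, hsum⟩
    have ha' : ∀ m, al m * a' (m+1) - be m * a' m + ga m * a' (m+2) = 0 := by
      intro m
      have h := hrec' m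
      unfold HeunRec at h
      push_cast at h
      linear_combination h
    -- geometric bound on a'
    have hzn : (0:ℝ) < ‖z‖ := norm_pos_iff.mpr hz0
    set ρ : ℝ := ‖z‖⁻¹ with hρdef
    have hρ : 0 < ρ := by positivity
    obtain ⟨A, hA⟩ := (by simpa using hsum.tendsto_atTop_zero.norm :
        Tendsto (fun m : ℕ => ‖a' m * z ^ m‖) atTop (𝓝 0)).bddAbove_range
    have hAb : ∀ m : ℕ, ‖a' m * z ^ m‖ ≤ A := fun m => hA (Set.mem_range_self m)
    have hA0 : 0 ≤ A := le_trans (norm_nonneg _) (hAb 0)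
    have ha'b : ∀ m : ℕ, ‖a' m‖ ≤ A * ρ^m := by
      intro m
      have h := hAb m
      rw [norm_mul, norm_pow] at h
      have h2 : ‖a' m‖ * ‖z‖^m * ρ^m ≤ A * ρ^m :=
        mul_le_mul_of_nonneg_right h (by positivity)
      have e : ‖z‖^m * ρ^m = 1 := by
        rw [hρdef, ← mul_pow, mul_inv_cancel₀ (ne_of_gt hzn), one_pow]
      calc ‖a' m‖ = ‖a' m‖ * (‖z‖^m * ρ^m) := by rw [e, mul_one]
        _ = ‖a' m‖ * ‖z‖^m * ρ^m := by ring
        _ ≤ A * ρ^m := h2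
    set W : ℕ → ℂ := fun m => a m * a' (m+1) - a (m+1) * a' m with hWdef
    have hWrec : ∀ m, ga m * W (m+1) = -(be m * W m) := by
      intro m
      have h := ha m
      have h' := ha' m
      simp only [hWdef]
      linear_combination a (m+1) * h' - a' (m+1) * h
    by_cases hW0 : W 0 = 0
    · -- proportionality
      have hW0' : a 0 * a' 1 - a 1 * a' 0 = 0 := hW0
      have hnt : ¬ (a 0 = 0 ∧ a 1 = 0) := by
        rintro ⟨h0, h1⟩
        have := heun_aux_zero al be ga hgne a ha h0 h1 K
        rw [haK] at this
        exact one_ne_zero this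
      by_cases h0 : a 0 = 0
      · have h1 : a 1 ≠ 0 := fun h1 => hnt ⟨h0, h1⟩
        refine ⟨a' 1 / a 1, heun_aux_prop al be ga hgne a a' _ ha ha' ?_ ?_⟩
        · rw [h0, mul_zero]
          have h2 : a 1 * a' 0 = 0 := by linear_combination a' 1 * h0 - hW0'
          exact (mul_eq_zero.mp h2).resolve_left h1
        · field_simp
      · refine ⟨a' 0 / a 0, heun_aux_prop al be ga hgne a a' _ ha ha' ?_ ?_⟩
        · field_simp
        · rw [div_mul_eq_mul_div, eq_div_iff h0]
          linear_combination hW0'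
    · -- contradiction: W 0 ≠ 0 is impossible
      exfalso
      have hWne : ∀ m, W m ≠ 0 := by
        intro m
        induction m with
        | zero => exact hW0
        | succ k ih =>
          intro h
          have hr := hWrec k
          rw [h, mul_zero] at hr
          exact ih ((mul_eq_zero.mp (neg_eq_zero.mp hr.symm)).resolve_left (hbne k))
      -- lower bound
      have hbg : ∀ j : ℕ, (1/4) * ‖ga (K+j)‖ ≤ ‖be (K+j)‖ := by
        intro j
        have h1 := hGu (K+j)
        have h2 := hBl (K+j)
        have hKM : 16 * ‖mu‖ * t + 10 * q + 100 < ((K+j:ℕ):ℝ) := by push_cast; linarith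
        have hmu0 : (0:ℝ) ≤ ‖mu‖ := norm_nonneg _
        have hMl : 10*q + 100 ≤ ((K+j:ℕ):ℝ) := by linarith
        set M : ℝ := ((K+j:ℕ):ℝ) with hM
        have hmu0 : (0:ℝ) ≤ ‖mu‖ := norm_nonneg _
        have key : (1/4) * (M+1+q) ≤ M+1-q := by linarith
        nlinarith [mul_le_mul_of_nonneg_left key hmu0]
      have hlow : ∀ j : ℕ, ‖W K‖ * (1/4)^j ≤ ‖W (K+j)‖ := by
        intro j
        induction j with
        | zero => simp
        | succ k ih =>
          have hr := hWrec (K+k)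
          have hnorm : ‖ga (K+k)‖ * ‖W (K+k+1)‖ = ‖be (K+k)‖ * ‖W (K+k)‖ := by
            rw [← norm_mul, hr, norm_neg, norm_mul]
          have h1 : (1/4) * ‖ga (K+k)‖ * ‖W (K+k)‖ ≤ ‖ga (K+k)‖ * ‖W (K+k+1)‖ := by
            rw [hnorm]
            exact mul_le_mul_of_nonneg_right (hbg k) (norm_nonneg _)
          have hgpos : 0 < ‖ga (K+k)‖ := norm_pos_iff.mpr (hgne (K+k))
          have h2 : (1/4) * ‖W (K+k)‖ ≤ ‖W (K+k+1)‖ := by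
            have h3 : ‖ga (K+k)‖ * ((1/4) * ‖W (K+k)‖) ≤ ‖ga (K+k)‖ * ‖W (K+k+1)‖ := by
              calc ‖ga (K+k)‖ * ((1/4) * ‖W (K+k)‖) = (1/4) * ‖ga (K+k)‖ * ‖W (K+k)‖ := by ring
                _ ≤ ‖ga (K+k)‖ * ‖W (K+k+1)‖ := h1
            exact le_of_mul_le_mul_left h3 hgpos
          have e : K + (k+1) = (K + k) + 1 := by omega
          rw [e]
          calc ‖W K‖ * (1/4)^(k+1) = (‖W K‖ * (1/4)^k) * (1/4) := by ring
            _ ≤ ‖W (K+k)‖ * (1/4) := by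
                exact mul_le_mul_of_nonneg_right ih (by norm_num)
            _ = (1/4) * ‖W (K+k)‖ := by ring
            _ ≤ ‖W (K+k+1)‖ := h2
      -- upper bound
      have haw : ∀ j : ℕ, ‖a (K+j)‖ ≤ 4 * t^j / (j)! := by
        intro j; rw [hval j]; exact hwb j
      have hfin : ∀ j : ℕ, ‖W K‖ ≤ (4*A*ρ^K*(ρ+t)) * ((4*t*ρ)^j / (j)!) := by
        intro j
        have hupW : ‖W (K+j)‖ ≤ (4*A*ρ^K*(ρ+t)) * ((t*ρ)^j / (j)!) := by
          have hWle : ‖W (K+j)‖ ≤ ‖a (K+j)‖ * ‖a' (K+j+1)‖ + ‖a (K+j+1)‖ * ‖a' (K+j)‖ := by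
            simp only [hWdef]
            calc ‖a (K+j) * a' (K+j+1) - a (K+j+1) * a' (K+j)‖
                ≤ ‖a (K+j) * a' (K+j+1)‖ + ‖a (K+j+1) * a' (K+j)‖ := norm_sub_le _ _
              _ = ‖a (K+j)‖ * ‖a' (K+j+1)‖ + ‖a (K+j+1)‖ * ‖a' (K+j)‖ := by
                  rw [norm_mul, norm_mul]
          have b1 : ‖a (K+j)‖ * ‖a' (K+j+1)‖ ≤ (4 * t^j / (j)!) * (A * (ρ^K * ρ^j * ρ)) := by
            have e1 : A * ρ^(K+j+1) = A * (ρ^K * ρ^j * ρ) := by rw [pow_add, pow_add, pow_one]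
            have := ha'b (K+j+1)
            rw [e1] at this
            exact mul_le_mul (haw j) this (norm_nonneg _) (by positivity)
          have b2 : ‖a (K+j+1)‖ * ‖a' (K+j)‖ ≤ (4 * t^(j+1) / ((j+1))!) * (A * (ρ^K * ρ^j)) := by
            have e1 : A * ρ^(K+j) = A * (ρ^K * ρ^j) := by rw [pow_add]
            have e2 : K + j + 1 = K + (j+1) := by omega
            have h3 := haw (j+1)
            rw [← e2] at h3
            have := ha'b (K+j)
            rw [e1] at this
            exact mul_le_mul h3 this (norm_nonneg _) (by positivity)
          have b3 : (4 : ℝ) * t^(j+1) / ((j+1))! ≤ 4 * (t * t^j) / (j)! := by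
            rw [pow_succ]
            have hf : ((j)! : ℝ) ≤ (((j+1))! : ℝ) := by
              exact_mod_cast Nat.factorial_le (Nat.le_succ j)
            have hf0 : (0:ℝ) < ((j)! : ℝ) := by exact_mod_cast Nat.factorial_pos j
            have hf1 : (0:ℝ) < (((j+1))! : ℝ) := by exact_mod_cast Nat.factorial_pos (j+1)
            rw [div_le_div_iff₀ hf1 hf0]
            have h40 : (0:ℝ) ≤ 4 * (t * t^j) := by positivity
            nlinarith [mul_le_mul_of_nonneg_left hf h40]
          have b2' : ‖a (K+j+1)‖ * ‖a' (K+j)‖ ≤ (4 * (t * t^j) / (j)!) * (A * (ρ^K * ρ^j)) := by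
            refine b2.trans (mul_le_mul_of_nonneg_right b3 (by positivity))
          calc ‖W (K+j)‖ ≤ ‖a (K+j)‖ * ‖a' (K+j+1)‖ + ‖a (K+j+1)‖ * ‖a' (K+j)‖ := hWle
            _ ≤ (4 * t^j / (j)!) * (A * (ρ^K * ρ^j * ρ)) + (4 * (t * t^j) / (j)!) * (A * (ρ^K * ρ^j)) := by
                exact add_le_add b1 b2'
            _ = (4*A*ρ^K*(ρ+t)) * ((t*ρ)^j / (j)!) := by
                rw [mul_pow]; ring
        have hl := hlow j
        have h44 : ((4:ℝ)*t*ρ)^j = 4^j * (t*ρ)^j := by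
          rw [← mul_pow, show (4:ℝ)*(t*ρ) = 4*t*ρ by ring]
        have h4j : (0:ℝ) < (4:ℝ)^j := by positivity
        have e14 : ‖W K‖ * ((1/4)^j * 4^j) ≤ ‖W (K+j)‖ * 4^j := by
          calc ‖W K‖ * ((1/4)^j * 4^j) = (‖W K‖ * (1/4)^j) * 4^j := by ring
            _ ≤ ‖W (K+j)‖ * 4^j := mul_le_mul_of_nonneg_right hl (by positivity)
        have e15 : ((1:ℝ)/4)^j * 4^j = 1 := by
          rw [← mul_pow]; norm_num
        rw [e15, mul_one] at e14
        calc ‖W K‖ ≤ ‖W (K+j)‖ * 4^j := e14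
          _ ≤ ((4*A*ρ^K*(ρ+t)) * ((t*ρ)^j / (j)!)) * 4^j :=
              mul_le_mul_of_nonneg_right hupW (by positivity)
          _ = (4*A*ρ^K*(ρ+t)) * ((4*t*ρ)^j / (j)!) := by
              rw [h44]; ring
      have htend : Tendsto (fun j : ℕ => (4*A*ρ^K*(ρ+t)) * ((4*t*ρ)^j / (j)!)) atTop (𝓝 0) := by
        have := (FloorSemiring.tendsto_pow_div_factorial_atTop (K := ℝ) (4*t*ρ)).const_mul
          (4*A*ρ^K*(ρ+t))
        simpa using this
      have hle : ‖W K‖ ≤ 0 := ge_of_tendsto' htend hfin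
      exact hWne K (norm_le_zero_iff.mp hle)
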